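/- The number of extreme points of the bisubmodular polyhedron P₊(f) is at most 2^n · n!. -/

import Mathlib

open Finset

namespace BisubProof

variable {n : ℕ}

abbrev SP (n : ℕ) := Finset (Fin n) × Finset (Fin n)

noncomputable def chi (P : SP n) (i : Fin n) : ℝ :=
  (if i ∈ P.1 then 1 else 0) - (if i ∈ P.2 then 1 else 0)

noncomputable def xval (x : Fin n → ℝ) (P : SP n) : ℝ :=
  ∑ i ∈ P.1, x i - ∑ i ∈ P.2, x i

def scup (P Q : SP n) : SP n :=
  ((P.1 ∪ Q.1) \ (P.2 ∪ Q.2), (P.2 ∪ Q.2) \ (P.1 ∪ Q.1))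

def scap (P Q : SP n) : SP n := (P.1 ∩ Q.1, P.2 ∩ Q.2)

def supp (P : SP n) : Finset (Fin n) := P.1 ∪ P.2

def Tight (f : Finset (Fin n) → Finset (Fin n) → ℝ) (x : Fin n → ℝ) (P : SP n) : Prop :=
  Disjoint P.1 P.2 ∧ xval x P = f P.1 P.2

def InPoly (f : Finset (Fin n) → Finset (Fin n) → ℝ) (x : Fin n → ℝ) : Prop :=
  ∀ X Y : Finset (Fin n), Disjoint X Y → ∑ i ∈ X, x i - ∑ i ∈ Y, x i ≤ f X Y

/-- dual spanning invariant above `S` -/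
def Inv (f : Finset (Fin n) → Finset (Fin n) → ℝ) (x : Fin n → ℝ) (S : SP n) : Prop :=
  ∀ d : Fin n → ℝ, (∀ P : SP n, Tight f x P → S ≤ P → ∑ i, chi P i * d i = 0) →
    (∀ i ∈ supp S, d i = 0) → d = 0

def IsBisub (f : Finset (Fin n) → Finset (Fin n) → ℝ) : Prop :=
  ∀ X₁ Y₁ X₂ Y₂ : Finset (Fin n), Disjoint X₁ Y₁ → Disjoint X₂ Y₂ →
    f ((X₁ ∪ X₂) \ (Y₁ ∪ Y₂)) ((Y₁ ∪ Y₂) \ (X₁ ∪ X₂)) + f (X₁ ∩ X₂) (Y₁ ∩ Y₂)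
      ≤ f X₁ Y₁ + f X₂ Y₂

lemma le_def' {P Q : SP n} : P ≤ Q ↔ P.1 ⊆ Q.1 ∧ P.2 ⊆ Q.2 := by
  constructor
  · intro h; exact ⟨h.1, h.2⟩
  · intro h; exact ⟨h.1, h.2⟩

lemma supp_mono {P Q : SP n} (h : P ≤ Q) : supp P ⊆ supp Q :=
  Finset.union_subset_union h.1 h.2

lemma eq_of_le_of_supp_subset {P Q : SP n} (hQ : Disjoint Q.1 Q.2) (h : P ≤ Q)
    (hs : supp Q ⊆ supp P) : P = Q := by
  have h1 : Q.1 ⊆ P.1 := by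
    intro i hi
    have : i ∈ supp P := hs (by simp [supp, hi])
    rcases Finset.mem_union.mp this with h' | h'
    · exact h'
    · exact absurd (h.2 h') (Finset.disjoint_left.mp hQ hi)
  have h2 : Q.2 ⊆ P.2 := by
    intro i hi
    have : i ∈ supp P := hs (by simp [supp, hi])
    rcases Finset.mem_union.mp this with h' | h'
    · exact absurd (h.1 h') fun hh => (Finset.disjoint_left.mp hQ hh) hi
    · exact h'
  exact Prod.ext (Finset.Subset.antisymm h.1 h1) (Finset.Subset.antisymm h.2 h2)

lemma scap_le_left (P Q : SP n) : scap P Q ≤ P :=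
  le_def'.mpr ⟨Finset.inter_subset_left, Finset.inter_subset_left⟩

lemma le_scap {S P Q : SP n} (h1 : S ≤ P) (h2 : S ≤ Q) : S ≤ scap P Q :=
  le_def'.mpr ⟨Finset.subset_inter h1.1 h2.1, Finset.subset_inter h1.2 h2.2⟩

lemma le_scup {S P Q : SP n} (hP : Disjoint P.1 P.2) (hQ : Disjoint Q.1 Q.2)
    (h1 : S ≤ P) (h2 : S ≤ Q) : S ≤ scup P Q := by
  refine le_def'.mpr ⟨?_, ?_⟩
  · intro i hi
    simp only [scup, mem_sdiff, mem_union]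
    refine ⟨Or.inl (h1.1 hi), ?_⟩
    rintro (h | h)
    · exact Finset.disjoint_left.mp hP (h1.1 hi) h
    · exact Finset.disjoint_left.mp hQ (h2.1 hi) h
  · intro i hi
    simp only [scup, mem_sdiff, mem_union]
    refine ⟨Or.inl (h1.2 hi), ?_⟩
    rintro (h | h)
    · exact Finset.disjoint_left.mp hP h (h1.2 hi)
    · exact Finset.disjoint_left.mp hQ h (h2.2 hi)

lemma mem_scup_fst {S' U : SP n} (hS' : Disjoint S'.1 S'.2)
    {i : Fin n} (hi : i ∈ S'.1) (hiU : i ∉ U.2) : i ∈ (scup S' U).1 := by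
  simp only [scup, mem_sdiff, mem_union]
  exact ⟨Or.inl hi, by rintro (h | h); exact Finset.disjoint_left.mp hS' hi h; exact hiU h⟩

lemma mem_scup_snd {S' U : SP n} (hS' : Disjoint S'.1 S'.2)
    {i : Fin n} (hi : i ∈ S'.2) (hiU : i ∉ U.1) : i ∈ (scup S' U).2 := by
  simp only [scup, mem_sdiff, mem_union]
  exact ⟨Or.inl hi, by rintro (h | h); exact Finset.disjoint_left.mp hS' h hi; exact hiU h⟩

lemma chi_between {S M S' : SP n} {e₀ : Fin n} (hS' : Disjoint S'.1 S'.2) (h1 : S ≤ M)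
    (h2 : M ≤ S') (hsupp : supp S' \ supp S ⊆ {e₀}) {i : Fin n} (hi : i ≠ e₀) :
    chi M i = chi S' i := by
  have key1 : i ∈ S'.1 → i ∈ S.1 := by
    intro h
    by_cases hs : i ∈ supp S
    · rcases Finset.mem_union.mp hs with h' | h'
      · exact h'
      · exact absurd (h2.2 (h1.2 h')) (Finset.disjoint_left.mp hS' h)
    · exact absurd (Finset.mem_singleton.mp (hsupp (Finset.mem_sdiff.mpr
        ⟨Finset.mem_union.mpr (Or.inl h), hs⟩))) hi
  have key2 : i ∈ S'.2 → i ∈ S.2 := by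
    intro h
    by_cases hs : i ∈ supp S
    · rcases Finset.mem_union.mp hs with h' | h'
      · exact absurd h (Finset.disjoint_left.mp hS' (h2.1 (h1.1 h')))
      · exact h'
    · exact absurd (Finset.mem_singleton.mp (hsupp (Finset.mem_sdiff.mpr
        ⟨Finset.mem_union.mpr (Or.inr h), hs⟩))) hi
  have e1 : i ∈ M.1 ↔ i ∈ S'.1 := ⟨fun h => h2.1 h, fun h => h1.1 (key1 h)⟩
  have e2 : i ∈ M.2 ↔ i ∈ S'.2 := ⟨fun h => h2.2 h, fun h => h1.2 (key2 h)⟩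
  simp only [chi, e1, e2]

lemma scap_scup_fst (T U : SP n) (hT : Disjoint T.1 T.2) :
    (scap T (scup T U)).1 = T.1 \ U.2 := by
  ext i
  simp only [scap, scup, mem_inter, mem_sdiff, mem_union]
  constructor
  · rintro ⟨h1, _, h3⟩
    exact ⟨h1, fun h => h3 (Or.inr h)⟩
  · rintro ⟨h1, h2⟩
    exact ⟨h1, Or.inl h1, by rintro (h | h); exact Finset.disjoint_left.mp hT h1 h; exact h2 h⟩

lemma scap_scup_snd (T U : SP n) (hT : Disjoint T.1 T.2) :
    (scap T (scup T U)).2 = T.2 \ U.1 := by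
  ext i
  simp only [scap, scup, mem_inter, mem_sdiff, mem_union]
  constructor
  · rintro ⟨h1, _, h3⟩
    exact ⟨h1, fun h => h3 (Or.inr h)⟩
  · rintro ⟨h1, h2⟩
    exact ⟨h1, Or.inl h1, by rintro (h | h); exact Finset.disjoint_left.mp hT h h1; exact h2 h⟩

lemma chi_valuation {P Q : SP n} (hP : Disjoint P.1 P.2) (hQ : Disjoint Q.1 Q.2) (i : Fin n) :
    chi (scup P Q) i + chi (scap P Q) i = chi P i + chi Q i := by
  have h1 : i ∈ P.1 → i ∉ P.2 := fun h => Finset.disjoint_left.mp hP h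
  have h2 : i ∈ Q.1 → i ∉ Q.2 := fun h => Finset.disjoint_left.mp hQ h
  simp only [chi, scup, scap, mem_sdiff, mem_union, mem_inter]
  by_cases a : i ∈ P.1 <;> by_cases b : i ∈ P.2 <;> by_cases c : i ∈ Q.1 <;>
    by_cases d : i ∈ Q.2 <;> simp_all

lemma xval_chi (x : Fin n → ℝ) (P : SP n) : xval x P = ∑ i, chi P i * x i := by
  simp only [chi, xval, sub_mul, ite_mul, one_mul, zero_mul, Finset.sum_sub_distrib]
  rw [Finset.sum_ite_mem, Finset.sum_ite_mem, Finset.univ_inter, Finset.univ_inter]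

lemma xval_valuation (x : Fin n → ℝ) {P Q : SP n} (hP : Disjoint P.1 P.2)
    (hQ : Disjoint Q.1 Q.2) :
    xval x (scup P Q) + xval x (scap P Q) = xval x P + xval x Q := by
  simp only [xval_chi]
  rw [← Finset.sum_add_distrib, ← Finset.sum_add_distrib]
  exact Finset.sum_congr rfl fun i _ => by
    rw [← add_mul, ← add_mul, chi_valuation hP hQ]

lemma scup_disj (P Q : SP n) : Disjoint (scup P Q).1 (scup P Q).2 := by
  simp only [scup]
  rw [Finset.disjoint_left]
  intro a ha hb
  simp only [mem_sdiff] at ha hb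
  exact hb.2 ha.1

lemma scap_disj {P Q : SP n} (hP : Disjoint P.1 P.2) : Disjoint (scap P Q).1 (scap P Q).2 :=
  hP.mono Finset.inter_subset_left Finset.inter_subset_left

section
variable {f : Finset (Fin n) → Finset (Fin n) → ℝ} {x : Fin n → ℝ}

lemma InPoly.xval_le (hx : InPoly f x) {P : SP n} (h : Disjoint P.1 P.2) :
    xval x P ≤ f P.1 P.2 := hx P.1 P.2 h

lemma tight_closed (hbi : IsBisub f) (hx : InPoly f x) {P Q : SP n}
    (hP : Tight f x P) (hQ : Tight f x Q) :
    Tight f x (scup P Q) ∧ Tight f x (scap P Q) := by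
  have hd1 := scup_disj P Q
  have hd2 := scap_disj (Q := Q) hP.1
  have h1 : xval x (scup P Q) ≤ f (scup P Q).1 (scup P Q).2 := hx.xval_le hd1
  have h2 : xval x (scap P Q) ≤ f (scap P Q).1 (scap P Q).2 := hx.xval_le hd2
  have h3 := hbi P.1 P.2 Q.1 Q.2 hP.1 hQ.1
  have h4 := xval_valuation x hP.1 hQ.1
  have e1 : f (scup P Q).1 (scup P Q).2
      = f ((P.1 ∪ Q.1) \ (P.2 ∪ Q.2)) ((P.2 ∪ Q.2) \ (P.1 ∪ Q.1)) := rfl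
  have e2 : f (scap P Q).1 (scap P Q).2 = f (P.1 ∩ Q.1) (P.2 ∩ Q.2) := rfl
  rw [hP.2, hQ.2] at h4
  constructor
  · exact ⟨hd1, by rw [e1]; linarith [hP.2, hQ.2]⟩
  · exact ⟨hd2, by rw [e2]; linarith⟩

lemma dot_congr_off {P Q : SP n} {d : Fin n → ℝ} {e₀ : Fin n} (hd : d e₀ = 0)
    (h : ∀ i, i ≠ e₀ → chi P i = chi Q i) :
    ∑ i, chi P i * d i = ∑ i, chi Q i * d i := by
  refine Finset.sum_congr rfl fun i _ => ?_
  by_cases hi : i = e₀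
  · rw [hi, hd, mul_zero, mul_zero]
  · rw [h i hi]

lemma dot_valuation {P Q : SP n} (hP : Disjoint P.1 P.2) (hQ : Disjoint Q.1 Q.2)
    (d : Fin n → ℝ) :
    (∑ i, chi (scup P Q) i * d i) + ∑ i, chi (scap P Q) i * d i
      = (∑ i, chi P i * d i) + ∑ i, chi Q i * d i := by
  rw [← Finset.sum_add_distrib, ← Finset.sum_add_distrib]
  exact Finset.sum_congr rfl fun i _ => by
    rw [← add_mul, ← add_mul, chi_valuation hP hQ]

/-- Invariant propagates along a one-element tight extension. -/
lemma inv_step (hbi : IsBisub f) (hx : InPoly f x) {S S' : SP n}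
    (hS' : Tight f x S') (hle : S ≤ S')
    (hsupp : supp S' \ supp S ⊆ {e₀}) (he₀ : e₀ ∈ supp S') (hInv : Inv f x S) :
    Inv f x S' := by
  intro d h1 h2
  refine hInv d ?_ fun i hi => h2 i (supp_mono hle hi)
  intro U hU hSU
  have hde₀ : d e₀ = 0 := h2 e₀ he₀
  have dotS' : ∑ i, chi S' i * d i = 0 := h1 S' hS' le_rfl
  have hbetween : ∀ M : SP n, S ≤ M → M ≤ S' → ∑ i, chi M i * d i = 0 := by
    intro M hm1 hm2
    rw [dot_congr_off hde₀ (fun i hi => chi_between hS'.1 hm1 hm2 hsupp hi)]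
    exact dotS'
  -- a generic fact: dot of U equals dot of (scup S' U)
  have hdot_scup : ∀ U : SP n, Tight f x U → S ≤ U →
      ∑ i, chi U i * d i = ∑ i, chi (scup S' U) i * d i := by
    intro U hU hSU
    have hval := dot_valuation hS'.1 hU.1 d
    have hcap : ∑ i, chi (scap S' U) i * d i = 0 :=
      hbetween (scap S' U) (le_scap (le_trans hle (le_refl S')) hSU) (scap_le_left _ _)
    linarith
  -- core claim
  have core : ∀ U : SP n, Tight f x U → S ≤ U → S' ≤ scup S' U →
      ∑ i, chi U i * d i = 0 := by
    intro U hU hSU hge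
    rw [hdot_scup U hU hSU]
    exact h1 (scup S' U) (tight_closed hbi hx hS' hU).1 hge
  -- S' ≤ scup S' U unless a conflict at e₀; in the conflict case e₀ ∉ supp (scup S' U)
  have almost : ∀ U : SP n, Tight f x U → S ≤ U → (e₀ ∉ U.1 ∪ U.2 ∨ (e₀ ∈ S'.1 ∧ e₀ ∈ U.1)
      ∨ (e₀ ∈ S'.2 ∧ e₀ ∈ U.2)) → S' ≤ scup S' U := by
    intro U hU hSU hcase
    have hUd := hU.1
    refine le_def'.mpr ⟨?_, ?_⟩
    · intro i hi
      refine mem_scup_fst hS'.1 hi ?_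
      by_cases hie : i = e₀
      · subst hie
        rcases hcase with h | ⟨_, h⟩ | ⟨h, _⟩
        · intro hh; exact h (Finset.mem_union.mpr (Or.inr hh))
        · exact Finset.disjoint_left.mp hUd h
        · exact absurd hi (Finset.disjoint_left.mp hS'.1.symm h)
      · -- i ∈ S'.1, i ≠ e₀ ⇒ i ∈ S.1 ⊆ U.1, disjoint from U.2
        have : i ∈ S.1 := by
          by_cases hs : i ∈ supp S
          · rcases Finset.mem_union.mp hs with h' | h'
            · exact h'
            · exact absurd (hle.2 h') (Finset.disjoint_left.mp hS'.1 hi)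
          · exact absurd (Finset.mem_singleton.mp (hsupp (Finset.mem_sdiff.mpr
              ⟨Finset.mem_union.mpr (Or.inl hi), hs⟩))) hie
        exact Finset.disjoint_left.mp hUd (hSU.1 this)
    · intro i hi
      refine mem_scup_snd hS'.1 hi ?_
      by_cases hie : i = e₀
      · subst hie
        rcases hcase with h | ⟨h, _⟩ | ⟨_, h⟩
        · intro hh; exact h (Finset.mem_union.mpr (Or.inl hh))
        · exact absurd hi (Finset.disjoint_left.mp hS'.1 h)
        · exact fun hh => Finset.disjoint_left.mp hUd hh h
      · have : i ∈ S.2 := by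
          by_cases hs : i ∈ supp S
          · rcases Finset.mem_union.mp hs with h' | h'
            · exact absurd hi (Finset.disjoint_left.mp hS'.1 (hle.1 h'))
            · exact h'
          · exact absurd (Finset.mem_singleton.mp (hsupp (Finset.mem_sdiff.mpr
              ⟨Finset.mem_union.mpr (Or.inr hi), hs⟩))) hie
        exact fun hh => Finset.disjoint_left.mp hUd hh (hSU.2 this)
  -- if e₀ survives in scup S' U then there was no conflict
  have key : e₀ ∈ supp (scup S' U) → S' ≤ scup S' U := by
    intro hmem
    refine almost U hU hSU ?_
    have h1 : e₀ ∈ S'.1 ∨ e₀ ∈ S'.2 := Finset.mem_union.mp he₀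
    have h2 := Finset.mem_union.mp hmem
    simp only [scup, mem_sdiff, mem_union] at h2
    simp only [Finset.mem_union]
    tauto
  by_cases hc : S' ≤ scup S' U
  · exact core U hU hSU hc
  · set U' := scup S' U with hU'def
    have hU' : Tight f x U' := (tight_closed hbi hx hS' hU).1
    have hSU' : S ≤ U' := le_scup hS'.1 hU.1 hle hSU
    have he₀U' : e₀ ∉ supp U' := fun h => hc (key h)
    have hge : S' ≤ scup S' U' := by
      refine almost U' hU' hSU' (Or.inl ?_)
      simpa [supp] using he₀U'
    have hzero : ∑ i, chi U' i * d i = 0 := core U' hU' hSU' hge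
    rw [hdot_scup U hU hSU]
    exact hzero

lemma step (hbi : IsBisub f) (hx : InPoly f x) {S : SP n} (hS : Tight f x S)
    (hInv : Inv f x S) (hk : (supp S).card < n) :
    ∃ S', Tight f x S' ∧ S ≤ S' ∧ (supp S').card = (supp S).card + 1 ∧ Inv f x S' := by
  classical
  -- Step 1: there is a tight pair strictly above S
  have hex : ∃ T : SP n, Tight f x T ∧ S ≤ T ∧ T ≠ S := by
    by_contra h
    push_neg at h
    obtain ⟨i₀, hi₀⟩ : ∃ i₀, i₀ ∉ supp S := by
      by_contra h'
      push_neg at h'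
      have : supp S = Finset.univ := Finset.eq_univ_iff_forall.mpr h'
      rw [this, Finset.card_univ, Fintype.card_fin] at hk
      exact lt_irrefl _ hk
    set d : Fin n → ℝ := fun i => if i = i₀ then 1 else 0 with hd
    have hd0 : d = 0 := by
      refine hInv d ?_ ?_
      · intro P hP hSP
        have hPS : P = S := h P hP hSP
        subst hPS
        have : ∀ i, chi P i * d i = if i = i₀ then chi P i else 0 := by
          intro i; simp only [hd]
          by_cases hi : i = i₀ <;> simp [hi]
        rw [Finset.sum_congr rfl fun i _ => this i, Finset.sum_ite_eq' Finset.univ i₀ (chi P)]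
        have : chi P i₀ = 0 := by
          have h1 : i₀ ∉ P.1 := fun hh => hi₀ (Finset.mem_union.mpr (Or.inl hh))
          have h2 : i₀ ∉ P.2 := fun hh => hi₀ (Finset.mem_union.mpr (Or.inr hh))
          simp [chi, h1, h2]
        simp [this]
      · intro i hi
        have : i ≠ i₀ := fun hh => hi₀ (hh ▸ hi)
        simp [hd, this]
    have := congrFun hd0 i₀
    simp [hd] at this
  -- Step 2: take T of minimal support among tight pairs strictly above S
  set A : Set ℕ := {m | ∃ T : SP n, (Tight f x T ∧ S ≤ T ∧ T ≠ S) ∧ (supp T).card = m} with hA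
  have hAne : A.Nonempty := by
    obtain ⟨T, hT⟩ := hex
    exact ⟨(supp T).card, T, hT, rfl⟩
  obtain ⟨T, ⟨hT, hST, hTS⟩, hTcard⟩ : ∃ T : SP n,
      (Tight f x T ∧ S ≤ T ∧ T ≠ S) ∧ (supp T).card = sInf A := Nat.sInf_mem hAne
  have hminle : ∀ W : SP n, Tight f x W → S ≤ W → W ≠ S →
      (supp T).card ≤ (supp W).card := by
    intro W h1 h2 h3
    rw [hTcard]
    exact Nat.sInf_le ⟨W, ⟨h1, h2, h3⟩, rfl⟩
  have hmin : ∀ W : SP n, Tight f x W → S ≤ W → W ≤ T → W = S ∨ W = T := by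
    intro W hW hSW hWT
    by_cases hWS : W = S
    · exact Or.inl hWS
    · right
      have h1 := hminle W hW hSW hWS
      have h2 : supp W ⊆ supp T := supp_mono hWT
      have h3 : supp W = supp T := Finset.eq_of_subset_of_card_le h2 h1
      exact eq_of_le_of_supp_subset hT.1 hWT (le_of_eq h3.symm)
  have hlt : (supp S).card < (supp T).card := by
    have hne : supp S ≠ supp T := by
      intro h
      exact hTS (eq_of_le_of_supp_subset hT.1 hST (le_of_eq h.symm)).symm
    exact Finset.card_lt_card (Finset.ssubset_iff_subset_ne.mpr ⟨supp_mono hST, hne⟩)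
  by_cases hcard : (supp T).card = (supp S).card + 1
  · refine ⟨T, hT, hST, hcard, ?_⟩
    have hone : (supp T \ supp S).card = 1 := by
      rw [Finset.card_sdiff_of_subset (supp_mono hST), hcard]
      omega
    obtain ⟨e₀, he₀⟩ := Finset.card_eq_one.mp hone
    have he₀mem : e₀ ∈ supp T := by
      have : e₀ ∈ supp T \ supp S := he₀ ▸ Finset.mem_singleton_self e₀
      exact (Finset.mem_sdiff.mp this).1
    exact inv_step hbi hx hT hST (le_of_eq he₀) he₀mem hInv
  · exfalso
    have h2card : 1 < (supp T \ supp S).card := by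
      rw [Finset.card_sdiff_of_subset (supp_mono hST)]
      omega
    obtain ⟨e, he, e', he', hee⟩ := Finset.one_lt_card.mp h2card
    have heT := (Finset.mem_sdiff.mp he).1
    have heS := (Finset.mem_sdiff.mp he).2
    have he'T := (Finset.mem_sdiff.mp he').1
    have he'S := (Finset.mem_sdiff.mp he').2
    set sg : Fin n → ℝ := fun i => if i ∈ T.1 then 1 else -1 with hsg
    -- rigidity: the signed value of any tight U ≥ S is constant on supp T \ supp S
    have prodval : ∀ U : SP n, Tight f x U → S ≤ U → ∃ v : ℝ,
        ∀ i ∈ supp T \ supp S, sg i * chi U i = v := by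
      intro U hU hSU
      rcases hmin (scap T U) (tight_closed hbi hx hT hU).2 (le_scap hST hSU)
          (scap_le_left T U) with hc | hc
      · -- scap T U = S
        rcases hmin (scap T (scup T U))
            (tight_closed hbi hx hT (tight_closed hbi hx hT hU).1).2
            (le_scap hST (le_scup hT.1 hU.1 hST hSU))
            (scap_le_left _ _) with hc2 | hc2
        · -- scap T (scup T U) = S : value -1
          refine ⟨-1, fun i hi => ?_⟩
          have hiT := (Finset.mem_sdiff.mp hi).1
          have hiS := (Finset.mem_sdiff.mp hi).2
          rcases Finset.mem_union.mp hiT with h1 | h1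
          · have hn1 : i ∉ S.1 := fun hh => hiS (Finset.mem_union.mpr (Or.inl hh))
            have : i ∉ (scap T (scup T U)).1 := by rw [hc2]; exact hn1
            rw [scap_scup_fst T U hT.1] at this
            have hiU2 : i ∈ U.2 := by
              by_contra hh
              exact this (Finset.mem_sdiff.mpr ⟨h1, hh⟩)
            have hiU1 : i ∉ U.1 := fun hh => Finset.disjoint_left.mp hU.1 hh hiU2
            simp [hsg, chi, h1, hiU1, hiU2]
          · have hn1 : i ∉ S.2 := fun hh => hiS (Finset.mem_union.mpr (Or.inr hh))
            have hiT1 : i ∉ T.1 := fun hh => Finset.disjoint_left.mp hT.1 hh h1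
            have : i ∉ (scap T (scup T U)).2 := by rw [hc2]; exact hn1
            rw [scap_scup_snd T U hT.1] at this
            have hiU1 : i ∈ U.1 := by
              by_contra hh
              exact this (Finset.mem_sdiff.mpr ⟨h1, hh⟩)
            have hiU2 : i ∉ U.2 := fun hh => Finset.disjoint_left.mp hU.1 hiU1 hh
            simp [hsg, chi, hiT1, hiU1, hiU2]
        · -- scap T (scup T U) = T : value 0
          refine ⟨0, fun i hi => ?_⟩
          have hiT := (Finset.mem_sdiff.mp hi).1
          have hiS := (Finset.mem_sdiff.mp hi).2
          rcases Finset.mem_union.mp hiT with h1 | h1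
          · have : i ∈ (scap T (scup T U)).1 := by rw [hc2]; exact h1
            rw [scap_scup_fst T U hT.1] at this
            have hiU2 : i ∉ U.2 := (Finset.mem_sdiff.mp this).2
            have hiU1 : i ∉ U.1 := by
              intro hh
              have : i ∈ (scap T U).1 := Finset.mem_inter.mpr ⟨h1, hh⟩
              rw [hc] at this
              exact hiS (Finset.mem_union.mpr (Or.inl this))
            simp [chi, hiU1, hiU2]
          · have : i ∈ (scap T (scup T U)).2 := by rw [hc2]; exact h1
            rw [scap_scup_snd T U hT.1] at this
            have hiU1 : i ∉ U.1 := (Finset.mem_sdiff.mp this).2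
            have hiU2 : i ∉ U.2 := by
              intro hh
              have : i ∈ (scap T U).2 := Finset.mem_inter.mpr ⟨h1, hh⟩
              rw [hc] at this
              exact hiS (Finset.mem_union.mpr (Or.inr this))
            simp [chi, hiU1, hiU2]
      · -- scap T U = T : T ≤ U, value 1
        have hTU1 : T.1 ⊆ U.1 := by
          have := congrArg Prod.fst hc
          simp only [scap] at this
          exact Finset.inter_eq_left.mp this
        have hTU2 : T.2 ⊆ U.2 := by
          have := congrArg Prod.snd hc
          simp only [scap] at this
          exact Finset.inter_eq_left.mp this
        refine ⟨1, fun i hi => ?_⟩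
        have hiT := (Finset.mem_sdiff.mp hi).1
        rcases Finset.mem_union.mp hiT with h1 | h1
        · have hiU1 : i ∈ U.1 := hTU1 h1
          have hiU2 : i ∉ U.2 := fun hh => Finset.disjoint_left.mp hU.1 hiU1 hh
          simp [hsg, chi, h1, hiU1, hiU2]
        · have hiT1 : i ∉ T.1 := fun hh => Finset.disjoint_left.mp hT.1 hh h1
          have hiU2 : i ∈ U.2 := hTU2 h1
          have hiU1 : i ∉ U.1 := fun hh => Finset.disjoint_left.mp hU.1 hh hiU2
          simp [hsg, chi, hiT1, hiU1, hiU2]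
    -- the separating functional
    set d : Fin n → ℝ := fun i => if i = e then sg e else if i = e' then -(sg e') else 0 with hd
    have hd0 : d = 0 := by
      refine hInv d ?_ ?_
      · intro U hU hSU
        obtain ⟨v, hv⟩ := prodval U hU hSU
        have split : ∀ i, chi U i * d i =
            (if i = e then chi U e * sg e else 0) + (if i = e' then chi U e' * (-(sg e')) else 0) := by
          intro i
          by_cases h1 : i = e
          · subst h1
            rw [if_pos rfl, if_neg hee]
            simp [hd, hee]
          · by_cases h2 : i = e'
            · subst h2
              rw [if_neg h1, if_pos rfl]
              simp [hd, h1]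
            · simp [hd, h1, h2]
        rw [Finset.sum_congr rfl fun i _ => split i, Finset.sum_add_distrib,
          Finset.sum_ite_eq' Finset.univ e (fun _ => chi U e * sg e),
          Finset.sum_ite_eq' Finset.univ e' (fun _ => chi U e' * (-(sg e')))]
        simp only [Finset.mem_univ, if_pos]
        have h1 : chi U e * sg e = v := by rw [mul_comm]; exact hv e he
        have h2 : chi U e' * sg e' = v := by rw [mul_comm]; exact hv e' he'
        have : chi U e' * (-(sg e')) = -v := by rw [mul_neg, h2]
        rw [h1, this]
        ring
      · intro i hi
        have h1 : i ≠ e := fun hh => heS (hh ▸ hi)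
        have h2 : i ≠ e' := fun hh => he'S (hh ▸ hi)
        simp [hd, h1, h2]
    have := congrFun hd0 e
    simp only [hd, if_pos rfl] at this
    have hsgne : sg e ≠ 0 := by
      simp only [hsg]
      split <;> norm_num
    exact hsgne this

lemma chi_abs_le (P : SP n) (i : Fin n) : |chi P i| ≤ 1 := by
  simp only [chi]; split <;> split <;> norm_num

lemma xval_add (x d : Fin n → ℝ) (e : ℝ) (P : SP n) :
    xval (fun i => x i + e * d i) P = xval x P + e * xval d P := by
  simp only [xval, Finset.sum_add_distrib, ← Finset.mul_sum]
  ring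

lemma span_of_extreme (hx : x ∈ Set.extremePoints ℝ {y : Fin n → ℝ | InPoly f y}) :
    ∀ d : Fin n → ℝ, (∀ P : SP n, Tight f x P → ∑ i, chi P i * d i = 0) → d = 0 := by
  classical
  intro d hd
  set M : ℝ := ∑ i, |d i| with hM
  have hM0 : 0 ≤ M := Finset.sum_nonneg fun i _ => abs_nonneg _
  set g : SP n → ℝ := fun P =>
    if Disjoint P.1 P.2 ∧ xval x P ≠ f P.1 P.2 then f P.1 P.2 - xval x P else 1 with hg
  have hgpos : ∀ P : SP n, 0 < g P := by
    intro P
    simp only [hg]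
    split
    · rename_i h
      have := hx.1 P.1 P.2 h.1
      have hne := h.2
      simp only [xval] at *
      cases lt_or_eq_of_le this with
      | inl h' => linarith
      | inr h' => exact absurd h' hne
    · norm_num
  have hne : (Finset.univ : Finset (SP n)).Nonempty := Finset.univ_nonempty
  set δ : ℝ := Finset.univ.inf' hne g with hδ
  have hδpos : 0 < δ := by
    rw [hδ, Finset.lt_inf'_iff]
    exact fun P _ => hgpos P
  have hδle : ∀ P : SP n, δ ≤ g P := fun P => Finset.inf'_le _ (Finset.mem_univ P)
  set ε : ℝ := δ / (M + 1) with hε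
  have hεpos : 0 < ε := div_pos hδpos (by linarith)
  have hdot : ∀ P : SP n, |∑ i, chi P i * d i| ≤ M := by
    intro P
    calc |∑ i, chi P i * d i| ≤ ∑ i, |chi P i * d i| := Finset.abs_sum_le_sum_abs _ _
    _ ≤ ∑ i, |d i| := by
        refine Finset.sum_le_sum fun i _ => ?_
        rw [abs_mul]
        calc |chi P i| * |d i| ≤ 1 * |d i| :=
          mul_le_mul_of_nonneg_right (chi_abs_le P i) (abs_nonneg _)
        _ = |d i| := one_mul _
  have key : ∀ s : ℝ, |s| = 1 → InPoly f (fun i => x i + (s * ε) * d i) := by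
    intro s hs X Y hXY
    set P : SP n := (X, Y) with hP
    have h1 : ∑ i ∈ X, (x i + (s*ε) * d i) - ∑ i ∈ Y, (x i + (s*ε) * d i)
        = xval x P + (s*ε) * xval d P := xval_add x d (s*ε) P
    rw [h1]
    by_cases ht : xval x P = f X Y
    · have : xval d P = 0 := by
        rw [xval_chi]; exact hd P ⟨hXY, ht⟩
      rw [this, ht]; ring_nf; rfl
    · have hslack : δ ≤ f X Y - xval x P := by
        have := hδle P
        simp only [hg] at this
        rwa [if_pos ⟨hXY, ht⟩] at this
      have hb : |(s*ε) * xval d P| ≤ ε * M := by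
        rw [abs_mul, abs_mul, hs, one_mul, abs_of_pos hεpos, xval_chi]
        exact mul_le_mul_of_nonneg_left (hdot P) (le_of_lt hεpos)
      have hlt : ε * M < δ := by
        rw [hε, div_mul_eq_mul_div, div_lt_iff₀ (by linarith : (0:ℝ) < M + 1)]
        nlinarith
      have := abs_le.mp hb
      linarith [this.2]
  have h₁ := key 1 (by norm_num)
  have h₂ := key (-1) (by norm_num)
  have hmem : x ∈ openSegment ℝ (fun i => x i + (-1 * ε) * d i) (fun i => x i + (1 * ε) * d i) := by
    refine ⟨1/2, 1/2, by norm_num, by norm_num, by norm_num, ?_⟩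
    funext i
    simp only [Pi.add_apply, Pi.smul_apply, smul_eq_mul]
    ring
  have heq := (hx.2 h₂ h₁ hmem)
  funext i
  have h3 := congrFun heq i
  change x i + (-1 * ε) * d i = x i at h3
  have h4 : (-1 * ε) * d i = 0 := by linarith
  rcases mul_eq_zero.mp h4 with h | h
  · exfalso; linarith
  · exact h

lemma tight_bot (hf0 : f ∅ ∅ = 0) (x : Fin n → ℝ) :
    Tight f x ((∅, ∅) : SP n) := by
  refine ⟨Finset.disjoint_empty_left _, ?_⟩
  simp [xval, hf0]

lemma inv_bot (hx : x ∈ Set.extremePoints ℝ {y : Fin n → ℝ | InPoly f y}) :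
    Inv f x ((∅, ∅) : SP n) := by
  intro d h1 _
  exact span_of_extreme hx d fun P hP => h1 P hP (by
    exact le_def'.mpr ⟨Finset.empty_subset _, Finset.empty_subset _⟩)

/-- existence of a full tight chain at an extreme point -/
lemma exists_chain (hbi : IsBisub f) (hf0 : f ∅ ∅ = 0)
    (hx : x ∈ Set.extremePoints ℝ {y : Fin n → ℝ | InPoly f y}) :
    ∃ c : ℕ → SP n, c 0 = (∅, ∅) ∧ (∀ j ≤ n, Tight f x (c j) ∧ (supp (c j)).card = j) ∧
      (∀ j, j + 1 ≤ n → c j ≤ c (j + 1)) := by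
  have hxp : InPoly f x := hx.1
  have main : ∀ k ≤ n, ∃ c : ℕ → SP n, c 0 = (∅, ∅) ∧
      (∀ j ≤ k, Tight f x (c j) ∧ (supp (c j)).card = j) ∧
      (∀ j, j + 1 ≤ k → c j ≤ c (j + 1)) ∧ Inv f x (c k) := by
    intro k
    induction k with
    | zero =>
      intro _
      refine ⟨fun _ => (∅, ∅), rfl, ?_, by omega, inv_bot hx⟩
      intro j hj
      interval_cases j
      exact ⟨tight_bot hf0 x, by simp [supp]⟩
    | succ k ih =>
      intro hk
      obtain ⟨c, hc0, hc1, hc2, hc3⟩ := ih (by omega)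
      have hck : Tight f x (c k) ∧ (supp (c k)).card = k := hc1 k le_rfl
      obtain ⟨S', hS'1, hS'2, hS'3, hS'4⟩ :=
        step hbi hxp hck.1 hc3 (by rw [hck.2]; omega)
      refine ⟨fun j => if j ≤ k then c j else S', by simp [hc0], ?_, ?_, by simp [hS'4]⟩
      · intro j hj
        by_cases hjk : j ≤ k
        · simp only [if_pos hjk]
          exact hc1 j hjk
        · have : j = k + 1 := by omega
          subst this
          simp only [if_neg hjk]
          exact ⟨hS'1, by rw [hS'3, hck.2]⟩
      · intro j hj
        by_cases hjk : j + 1 ≤ k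
        · simp only [if_pos hjk, if_pos (by omega : j ≤ k)]
          exact hc2 j hjk
        · have : j = k := by omega
          subst this
          simp only [if_pos le_rfl, if_neg (by omega : ¬ j + 1 ≤ j)]
          exact hS'2
  obtain ⟨c, hc0, hc1, hc2, _⟩ := main n le_rfl
  exact ⟨c, hc0, hc1, fun j hj => hc2 j hj⟩

lemma step_decomp {P Q : SP n} (hQ : Disjoint Q.1 Q.2) (h : P ≤ Q)
    {a : Fin n} (ha : supp Q \ supp P = {a}) :
    (a ∈ Q.1 ∧ Q.1 = insert a P.1 ∧ Q.2 = P.2) ∨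
    (a ∈ Q.2 ∧ Q.1 = P.1 ∧ Q.2 = insert a P.2) := by
  have haQ : a ∈ supp Q := (Finset.mem_sdiff.mp (ha ▸ Finset.mem_singleton_self a)).1
  have haP : a ∉ supp P := (Finset.mem_sdiff.mp (ha ▸ Finset.mem_singleton_self a)).2
  have hgen : ∀ i, i ∈ supp Q → i ∉ supp P → i = a := by
    intro i h1 h2
    exact Finset.mem_singleton.mp (ha ▸ Finset.mem_sdiff.mpr ⟨h1, h2⟩)
  rcases Finset.mem_union.mp haQ with h1 | h1
  · left
    refine ⟨h1, ?_, ?_⟩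
    · apply Finset.Subset.antisymm
      · intro i hi
        by_cases hiP : i ∈ P.1
        · exact Finset.mem_insert.mpr (Or.inr hiP)
        · have hiP2 : i ∉ P.2 := fun hh =>
            Finset.disjoint_left.mp hQ hi (h.2 hh)
          have : i ∉ supp P := by
            simp [supp, hiP, hiP2]
          exact Finset.mem_insert.mpr (Or.inl (hgen i (Finset.mem_union.mpr (Or.inl hi)) this))
      · intro i hi
        rcases Finset.mem_insert.mp hi with h' | h'
        · exact h' ▸ h1
        · exact h.1 h'
    · apply Finset.Subset.antisymm
      · intro i hi
        by_cases hiP : i ∈ P.2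
        · exact hiP
        · have hiP1 : i ∉ P.1 := fun hh =>
            Finset.disjoint_left.mp hQ (h.1 hh) hi
          have : i ∉ supp P := by simp [supp, hiP, hiP1]
          have hia : i = a := hgen i (Finset.mem_union.mpr (Or.inr hi)) this
          exact absurd (hia ▸ hi) (Finset.disjoint_left.mp hQ h1)
      · exact h.2
  · right
    refine ⟨h1, ?_, ?_⟩
    · apply Finset.Subset.antisymm
      · intro i hi
        by_cases hiP : i ∈ P.1
        · exact hiP
        · have hiP2 : i ∉ P.2 := fun hh =>
            Finset.disjoint_left.mp hQ hi (h.2 hh)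
          have : i ∉ supp P := by simp [supp, hiP, hiP2]
          have hia : i = a := hgen i (Finset.mem_union.mpr (Or.inl hi)) this
          exact absurd h1 (Finset.disjoint_left.mp hQ (hia ▸ hi))
      · exact h.1
    · apply Finset.Subset.antisymm
      · intro i hi
        by_cases hiP : i ∈ P.2
        · exact Finset.mem_insert.mpr (Or.inr hiP)
        · have hiP1 : i ∉ P.1 := fun hh =>
            Finset.disjoint_left.mp hQ (h.1 hh) hi
          have : i ∉ supp P := by simp [supp, hiP, hiP1]
          exact Finset.mem_insert.mpr (Or.inl (hgen i (Finset.mem_union.mpr (Or.inr hi)) this))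
      · intro i hi
        rcases Finset.mem_insert.mp hi with h' | h'
        · exact h' ▸ h1
        · exact h.2 h'

lemma val_plus {x : Fin n → ℝ} {P Q : SP n} (hP : Tight f x P) (hQ : Tight f x Q)
    {a : Fin n} (ha1 : a ∉ P.1) (hQ1 : Q.1 = insert a P.1) (hQ2 : Q.2 = P.2) :
    x a = f Q.1 Q.2 - f P.1 P.2 := by
  have h1 := hQ.2
  rw [xval, hQ1, hQ2, Finset.sum_insert ha1] at h1
  have h2 := hP.2
  rw [xval] at h2
  rw [hQ1, hQ2]
  linarith

lemma val_minus {x : Fin n → ℝ} {P Q : SP n} (hP : Tight f x P) (hQ : Tight f x Q)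
    {a : Fin n} (ha2 : a ∉ P.2) (hQ1 : Q.1 = P.1) (hQ2 : Q.2 = insert a P.2) :
    x a = f P.1 P.2 - f Q.1 Q.2 := by
  have h1 := hQ.2
  rw [xval, hQ1, hQ2, Finset.sum_insert ha2] at h1
  have h2 := hP.2
  rw [xval] at h2
  rw [hQ1, hQ2]
  linarith

end
end BisubProof

open BisubProof in
/-- The number of extreme points of the bisubmodular polyhedron `P₊(f)` is at most
`2^n · n!`. -/
theorem card_extremePoints_le {n : ℕ} (f : Finset (Fin n) → Finset (Fin n) → ℝ)
    (hbi : ∀ X₁ Y₁ X₂ Y₂ : Finset (Fin n), Disjoint X₁ Y₁ → Disjoint X₂ Y₂ →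
      f ((X₁ ∪ X₂) \ (Y₁ ∪ Y₂)) ((Y₁ ∪ Y₂) \ (X₁ ∪ X₂)) + f (X₁ ∩ X₂) (Y₁ ∩ Y₂)
        ≤ f X₁ Y₁ + f X₂ Y₂)
    (hf0 : f ∅ ∅ = 0) :
    (Set.extremePoints ℝ {x : Fin n → ℝ | ∀ X Y : Finset (Fin n), Disjoint X Y →
        ∑ i ∈ X, x i - ∑ i ∈ Y, x i ≤ f X Y}).Finite ∧
    (Set.extremePoints ℝ {x : Fin n → ℝ | ∀ X Y : Finset (Fin n), Disjoint X Y →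
        ∑ i ∈ X, x i - ∑ i ∈ Y, x i ≤ f X Y}).ncard ≤ 2 ^ n * n.factorial := by
  classical
  have hbi' : IsBisub f := hbi
  set E : Set (Fin n → ℝ) := Set.extremePoints ℝ {y : Fin n → ℝ | InPoly f y} with hE
  have hchain : ∀ x : E, ∃ c : ℕ → SP n, c 0 = (∅, ∅) ∧
      (∀ j ≤ n, Tight f x.1 (c j) ∧ (supp (c j)).card = j) ∧
      (∀ j, j + 1 ≤ n → c j ≤ c (j + 1)) := fun x => exists_chain hbi' hf0 x.2
  choose c hc0 hc1 hc2 using hchain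
  have hmle : ∀ (x : E) (j j' : ℕ), j ≤ j' → j' ≤ n → c x j ≤ c x j' := by
    intro x j j' hjj' hj'n
    have H : ∀ k, j + k ≤ n → c x j ≤ c x (j + k) := by
      intro k
      induction k with
      | zero => exact fun _ => le_rfl
      | succ k ih => exact fun h => le_trans (ih (by omega)) (hc2 x (j + k) (by omega))
    obtain ⟨k, rfl⟩ := Nat.exists_eq_add_of_le hjj'
    exact H k hj'n
  have hnew : ∀ (x : E) (j : Fin n), ∃ a : Fin n,
      supp (c x ((j : ℕ) + 1)) \ supp (c x (j : ℕ)) = {a} := by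
    intro x j
    have h1 := (hc1 x ((j : ℕ) + 1) j.isLt).2
    have h2 := (hc1 x (j : ℕ) (le_of_lt j.isLt)).2
    have hmono := hc2 x (j : ℕ) j.isLt
    refine Finset.card_eq_one.mp ?_
    rw [Finset.card_sdiff_of_subset (supp_mono hmono), h1, h2]
    omega
  choose A hA using hnew
  have hAmem : ∀ (x : E) (j : Fin n),
      A x j ∈ supp (c x ((j : ℕ) + 1)) ∧ A x j ∉ supp (c x (j : ℕ)) := by
    intro x j
    have := hA x j ▸ Finset.mem_singleton_self (A x j)
    exact Finset.mem_sdiff.mp this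
  have hAinj : ∀ x : E, Function.Injective (fun j => A x j) := by
    intro x j j' hjj'
    have hjj2 : A x j = A x j' := hjj'
    by_contra hne
    rcases lt_or_gt_of_ne (fun h : (j : ℕ) = (j' : ℕ) => hne (Fin.ext h)) with h | h
    · have h1 : A x j ∈ supp (c x (j' : ℕ)) :=
        supp_mono (hmle x ((j : ℕ) + 1) (j' : ℕ) (by omega) (le_of_lt j'.isLt))
          (hAmem x j).1
      rw [hjj2] at h1
      exact (hAmem x j').2 h1
    · have h1 : A x j' ∈ supp (c x (j : ℕ)) :=
        supp_mono (hmle x ((j' : ℕ) + 1) (j : ℕ) (by omega) (le_of_lt j.isLt))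
          (hAmem x j').1
      rw [← hjj2] at h1
      exact (hAmem x j).2 h1
  set ι : E → (Fin n ↪ Fin n) × (Fin n → Bool) := fun x =>
    (⟨fun j => A x j, hAinj x⟩, fun j => decide (A x j ∈ (c x ((j : ℕ) + 1)).1)) with hι
  have hιinj : Function.Injective ι := by
    intro x y hxy
    have hAeq : ∀ j : Fin n, A x j = A y j := fun j =>
      congrFun (congrArg (fun (g : Fin n ↪ Fin n) => (g : Fin n → Fin n))
        (congrArg Prod.fst hxy)) j
    have hsgn : ∀ j : Fin n, (A x j ∈ (c x ((j : ℕ) + 1)).1 ↔ A y j ∈ (c y ((j : ℕ) + 1)).1) :=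
      fun j => decide_eq_decide.mp (congrFun (congrArg Prod.snd hxy) j)
    -- the chains coincide
    have hceq : ∀ j, j ≤ n → c x j = c y j := by
      intro j
      induction j with
      | zero => intro _; rw [hc0 x, hc0 y]
      | succ j ihj =>
        intro hj
        have hcj : c x j = c y j := ihj (by omega)
        have hjn : j < n := by omega
        set jf : Fin n := ⟨j, hjn⟩ with hjf
        have hdx := (hc1 x (j + 1) hj).1.1
        have hdy := (hc1 y (j + 1) hj).1.1
        have hdecx := step_decomp hdx (hc2 x j hj) (hA x jf)
        have hdecy := step_decomp hdy (hc2 y j hj) (hA y jf)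
        have hAxy : A x jf = A y jf := hAeq jf
        rcases hdecx with ⟨hm1, hx1, hx2⟩ | ⟨hm1, hx1, hx2⟩ <;>
          rcases hdecy with ⟨hm2, hy1, hy2⟩ | ⟨hm2, hy1, hy2⟩
        · exact Prod.ext (by rw [hx1, hy1, hcj, hAxy]) (by rw [hx2, hy2, hcj])
        · exfalso
          have hthis : A y jf ∈ (c y (j + 1)).1 := (hsgn jf).mp hm1
          exact Finset.disjoint_left.mp hdy hthis hm2
        · exfalso
          have hthis : A x jf ∈ (c x (j + 1)).1 := (hsgn jf).mpr hm2
          exact Finset.disjoint_left.mp hdx hthis hm1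
        · exact Prod.ext (by rw [hx1, hy1, hcj]) (by rw [hx2, hy2, hcj, hAxy])
    -- conclude x = y coordinatewise
    have hsurj : Function.Surjective (fun j => A x j) :=
      Finite.injective_iff_surjective.mp (hAinj x)
    apply Subtype.ext
    funext i
    obtain ⟨j, hj⟩ := hsurj i
    simp only at hj
    have hjn : (j : ℕ) + 1 ≤ n := j.isLt
    have hTx0 : Tight f x.1 (c x (j : ℕ)) := (hc1 x (j : ℕ) (by omega)).1
    have hTx1 : Tight f x.1 (c x ((j : ℕ) + 1)) := (hc1 x ((j : ℕ) + 1) hjn).1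
    have hTy0 : Tight f y.1 (c x (j : ℕ)) := by
      rw [hceq (j : ℕ) (by omega)]; exact (hc1 y (j : ℕ) (by omega)).1
    have hTy1 : Tight f y.1 (c x ((j : ℕ) + 1)) := by
      rw [hceq ((j : ℕ) + 1) hjn]; exact (hc1 y ((j : ℕ) + 1) hjn).1
    have hdec := step_decomp hTx1.1 (hc2 x (j : ℕ) hjn) (hA x j)
    have hnotin := (hAmem x j).2
    have hni1 : A x j ∉ (c x (j : ℕ)).1 := fun hh =>
      hnotin (Finset.mem_union.mpr (Or.inl hh))
    have hni2 : A x j ∉ (c x (j : ℕ)).2 := fun hh =>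
      hnotin (Finset.mem_union.mpr (Or.inr hh))
    rcases hdec with ⟨hm, h1, h2⟩ | ⟨hm, h1, h2⟩
    · have hx := val_plus hTx0 hTx1 hni1 h1 h2
      have hy := val_plus hTy0 hTy1 hni1 h1 h2
      rw [← hj, hx, hy]
    · have hx := val_minus hTx0 hTx1 hni2 h1 h2
      have hy := val_minus hTy0 hTy1 hni2 h1 h2
      rw [← hj, hx, hy]
  haveI hfin : Finite E := Finite.of_injective ι hιinj
  have hfin' : E.Finite := Set.finite_coe_iff.mp hfin
  refine ⟨hfin', ?_⟩
  have hcard : E.ncard ≤ 2 ^ n * n.factorial := by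
    have h1 : E.ncard = Nat.card E := (Nat.card_coe_set_eq E).symm
    have h2 : Nat.card E ≤ Nat.card ((Fin n ↪ Fin n) × (Fin n → Bool)) :=
      Nat.card_le_card_of_injective ι hιinj
    have h3 : Nat.card ((Fin n ↪ Fin n) × (Fin n → Bool)) = n.factorial * 2 ^ n := by
      rw [Nat.card_eq_fintype_card, Fintype.card_prod, Fintype.card_embedding_eq]
      simp [Nat.descFactorial_self]
    rw [h1]
    exact le_trans h2 (le_of_eq (h3.trans (Nat.mul_comm _ _)))
  exact hcard
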